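/- If p, q, r are all powers of the same prime a, and x, y, z are positive integers with x + y + z = p + q + r and xyz = pqr, then the multiset {x,y,z} equals {p,q,r}. -/

import Mathlib

lemma two_pow_lt_aux {s t m : ℕ} (h1 : s < t) (h : 2^s + 2^t = 2^m) : False := by
  have hm : s < m := by
    have h2 : (2:ℕ)^s < 2^m := by have : 0 < (2:ℕ)^t := Nat.pow_pos (by norm_num); omega
    exact (Nat.pow_lt_pow_iff_right (by norm_num)).mp h2
  have key : 2^s * (1 + 2^(t-s)) = 2^s * 2^(m-s) := by
    rw [mul_add, mul_one, ← pow_add, ← pow_add]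
    rw [show s + (t-s) = t by omega, show s + (m-s) = m by omega]
    exact h
  have h3 : 1 + 2^(t-s) = 2^(m-s) := Nat.eq_of_mul_eq_mul_left (Nat.pow_pos (by norm_num)) key
  have d1 : 2 ∣ 2^(t-s) := dvd_pow_self 2 (by omega)
  have d2 : 2 ∣ 2^(m-s) := dvd_pow_self 2 (by omega)
  omega

lemma two_pow_eq {s t m : ℕ} (h : 2^s + 2^t = 2^m) : s = t ∧ m = s + 1 := by
  rcases lt_trichotomy s t with hst | rfl | hst
  · exact absurd h (fun h => two_pow_lt_aux hst h)
  · refine ⟨rfl, ?_⟩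
    have : (2:ℕ)^(s+1) = 2^m := by rw [pow_succ]; omega
    exact (Nat.pow_right_injective (le_refl 2) this).symm
  · exact absurd (by omega : 2^t + 2^s = 2^m) (fun h => two_pow_lt_aux hst h)

lemma no_two_core {b c L₁ : ℕ} (h : 2^b + 2^c = 2^L₁) (hsum : 3 + b + c = L₁ + 1) : False := by
  obtain ⟨hbc, hL⟩ := two_pow_eq h; omega

lemma no_two {u v w L : ℕ} (hu : 1 ≤ u) (hv : 1 ≤ v) (hw : 1 ≤ w)
    (hL : u + v + w = L) (hs : 2^u + 2^v + 2^w = 2 + 2^L) : False := by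
  obtain ⟨u₁, rfl⟩ : ∃ t, u = t + 1 := ⟨u - 1, by omega⟩
  obtain ⟨v₁, rfl⟩ : ∃ t, v = t + 1 := ⟨v - 1, by omega⟩
  obtain ⟨w₁, rfl⟩ : ∃ t, w = t + 1 := ⟨w - 1, by omega⟩
  obtain ⟨L₁, rfl⟩ : ∃ t, L = t + 1 := ⟨L - 1, by omega⟩
  have hs' : 2^u₁ + 2^v₁ + 2^w₁ = 1 + 2^L₁ := by
    have h2 : 2*(2^u₁ + 2^v₁ + 2^w₁) = 2*(1 + 2^L₁) := by
      have e : ∀ n : ℕ, (2:ℕ)^(n+1) = 2 * 2^n := fun n => by ring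
      rw [e, e, e] at hs; omega
    omega
  have hL₁ : 2 ≤ L₁ := by omega
  have hzz : u₁ = 0 ∨ v₁ = 0 ∨ w₁ = 0 := by
    by_contra hc
    push_neg at hc
    have d1 : 2 ∣ 2^u₁ := dvd_pow_self 2 hc.1
    have d2 : 2 ∣ 2^v₁ := dvd_pow_self 2 hc.2.1
    have d3 : 2 ∣ 2^w₁ := dvd_pow_self 2 hc.2.2
    have d4 : 2 ∣ 2^L₁ := dvd_pow_self 2 (by omega)
    omega
  rcases hzz with rfl | rfl | rfl
  · exact no_two_core (show 2^v₁ + 2^w₁ = 2^L₁ by simp at hs' ⊢; linarith) (by omega)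
  · exact no_two_core (show 2^u₁ + 2^w₁ = 2^L₁ by simp at hs' ⊢; linarith) (by omega)
  · exact no_two_core (show 2^u₁ + 2^v₁ = 2^L₁ by simp at hs' ⊢; linarith) (by omega)

lemma zero_transfer {a u v w i j l : ℕ} (ha : a.Prime)
    (hu : 1 ≤ u) (hv : 1 ≤ v) (hw : 1 ≤ w)
    (hzp : i = 0 ∨ j = 0 ∨ l = 0)
    (hsum : a^u + a^v + a^w = a^i + a^j + a^l)
    (hexp : u + v + w = i + j + l) : False := by
  have ha2 := ha.two_le
  have hdL : a ∣ a^u + a^v + a^w :=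
    dvd_add (dvd_add (dvd_pow_self a (by omega)) (dvd_pow_self a (by omega)))
      (dvd_pow_self a (by omega))
  -- helper for one-zero cases
  have one_case : ∀ b c : ℕ, a ∣ b → a ∣ c → a^u + a^v + a^w = 1 + b + c → False := by
    intro b c hb hc hs
    have h1 : a ∣ b + c + 1 := by
      rw [show b + c + 1 = 1 + b + c by ring, ← hs]; exact hdL
    have h3 : a ∣ 1 := (Nat.dvd_add_right (dvd_add hb hc)).mp h1
    have := Nat.le_of_dvd one_pos h3; omega
  -- helper for two-zero cases: get a = 2
  have two_case : ∀ c : ℕ, a ∣ c → a^u + a^v + a^w = 1 + 1 + c → a = 2 := by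
    intro c hc hs
    have h1 : a ∣ c + 2 := by
      rw [show c + 2 = 1 + 1 + c by ring, ← hs]; exact hdL
    have h3 : a ∣ 2 := (Nat.dvd_add_right hc).mp h1
    exact (Nat.prime_dvd_prime_iff_eq ha Nat.prime_two).mp h3
  rcases Nat.eq_zero_or_pos i with rfl | hi <;>
    rcases Nat.eq_zero_or_pos j with rfl | hj <;>
      rcases Nat.eq_zero_or_pos l with rfl | hl
  · omega  -- all zero: u+v+w = 0 contradicts hu
  · -- i = j = 0, l > 0
    have ha2' : a = 2 := two_case (a^l) (dvd_pow_self a (by omega)) (by rw [hsum]; simp [add_comm, add_left_comm, add_assoc])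
    subst ha2'
    exact no_two hu hv hw (show u+v+w = l by omega) (by simp at hsum; omega)
  · -- i = 0, j > 0, l = 0
    have ha2' : a = 2 := two_case (a^j) (dvd_pow_self a (by omega)) (by rw [hsum]; simp [add_comm, add_left_comm, add_assoc])
    subst ha2'
    exact no_two hu hv hw (show u+v+w = j by omega) (by simp at hsum; omega)
  · -- i = 0, j > 0, l > 0
    exact one_case (a^j) (a^l) (dvd_pow_self a (by omega)) (dvd_pow_self a (by omega))
      (by rw [hsum]; simp)
  · -- i > 0, j = 0, l = 0
    have ha2' : a = 2 := two_case (a^i) (dvd_pow_self a (by omega)) (by rw [hsum]; simp [add_comm, add_left_comm, add_assoc])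
    subst ha2'
    exact no_two hu hv hw (show u+v+w = i by omega) (by simp at hsum; omega)
  · -- i > 0, j = 0, l > 0
    exact one_case (a^i) (a^l) (dvd_pow_self a (by omega)) (dvd_pow_self a (by omega))
      (by rw [hsum]; simp [add_comm, add_left_comm, add_assoc])
  · -- i > 0, j > 0, l = 0
    exact one_case (a^i) (a^j) (dvd_pow_self a (by omega)) (dvd_pow_self a (by omega))
      (by rw [hsum]; simp [add_comm, add_left_comm, add_assoc])
  · omega  -- none zero contradicts hzp


lemma pair_ms {b c e f : ℕ} (hs : b + c = e + f) (hp : b * c = e * f) :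
    ({b, c} : Multiset ℕ) = {e, f} := by
  have hs' : (b:ℤ) + c = e + f := by exact_mod_cast hs
  have hp' : (b:ℤ) * c = e * f := by exact_mod_cast hp
  have h : ((b:ℤ) - e) * ((b:ℤ) - f) = 0 := by linear_combination (b:ℤ) * hs' - hp'
  rcases mul_eq_zero.mp h with h' | h'
  · have hbe : b = e := by exact_mod_cast sub_eq_zero.mp h'
    have hcf : c = f := by omega
    rw [hbe, hcf]
  · have hbf : b = f := by exact_mod_cast sub_eq_zero.mp h'
    have hce : c = e := by omega
    rw [hbf, hce]
    exact Multiset.cons_swap f e 0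

lemma triple_of_pair {b c e f : ℕ} (h : ({b, c} : Multiset ℕ) = {e, f}) :
    ({1, b, c} : Multiset ℕ) = {1, e, f} := by
  show (1 ::ₘ {b, c} : Multiset ℕ) = 1 ::ₘ {e, f}
  rw [h]

lemma rot (b c d : ℕ) : ({b, c, d} : Multiset ℕ) = {c, d, b} := by
  show (b ::ₘ c ::ₘ d ::ₘ 0 : Multiset ℕ) = c ::ₘ d ::ₘ b ::ₘ 0
  rw [Multiset.cons_swap b c, Multiset.cons_swap b d]

lemma pow_pair {a v w j l : ℕ} (ha2 : 2 ≤ a) (hs : a^v + a^w = a^j + a^l)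
    (he : v + w = j + l) : ({a^v, a^w} : Multiset ℕ) = {a^j, a^l} :=
  pair_ms hs (by rw [← pow_add, ← pow_add, he])

lemma key {a : ℕ} (ha : a.Prime) : ∀ S u v w i j l : ℕ,
    a^u + a^v + a^w = S → a^i + a^j + a^l = S → u + v + w = i + j + l →
    ({a^u, a^v, a^w} : Multiset ℕ) = {a^i, a^j, a^l} := by
  intro S
  induction S using Nat.strong_induction_on with
  | _ S IH =>
    intro u v w i j l h1 h2 hE
    have ha2 := ha.two_le
    have hsum : a^u + a^v + a^w = a^i + a^j + a^l := h1.trans h2.symm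
    by_cases hz : u = 0 ∨ v = 0 ∨ w = 0 ∨ i = 0 ∨ j = 0 ∨ l = 0
    · -- some exponent is zero: both sides contain a zero exponent
      have hzx : u = 0 ∨ v = 0 ∨ w = 0 := by
        by_contra hc
        push_neg at hc
        exact zero_transfer ha (by omega) (by omega) (by omega) (by tauto) hsum hE
      have hzp : i = 0 ∨ j = 0 ∨ l = 0 := by
        by_contra hc
        push_neg at hc
        exact zero_transfer ha (by omega) (by omega) (by omega) hzx hsum.symm hE.symm
      have hps : ∀ b c e f : ℕ, a^b + a^c = a^e + a^f → b + c = e + f →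
          ({a^b, a^c} : Multiset ℕ) = {a^e, a^f} := fun b c e f hs he =>
        pair_ms hs (by rw [← pow_add, ← pow_add, he])
      clear h1 h2
      rcases hzx with rfl | rfl | rfl <;> rcases hzp with rfl | rfl | rfl <;>
        simp only [pow_zero] at hsum ⊢
      · exact triple_of_pair (hps _ _ _ _ (by linarith) (by omega))
      · rw [rot (a^i) 1 (a^l)]
        exact triple_of_pair (hps _ _ _ _ (by linarith) (by omega))
      · rw [rot (a^i) (a^j) 1, rot (a^j) 1 (a^i)]
        exact triple_of_pair (hps _ _ _ _ (by linarith) (by omega))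
      · rw [rot (a^u) 1 (a^w)]
        exact triple_of_pair (hps _ _ _ _ (by linarith) (by omega))
      · rw [rot (a^u) 1 (a^w), rot (a^i) 1 (a^l)]
        exact triple_of_pair (hps _ _ _ _ (by linarith) (by omega))
      · rw [rot (a^u) 1 (a^w), rot (a^i) (a^j) 1, rot (a^j) 1 (a^i)]
        exact triple_of_pair (hps _ _ _ _ (by linarith) (by omega))
      · rw [rot (a^u) (a^v) 1, rot (a^v) 1 (a^u)]
        exact triple_of_pair (hps _ _ _ _ (by linarith) (by omega))
      · rw [rot (a^u) (a^v) 1, rot (a^v) 1 (a^u), rot (a^i) 1 (a^l)]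
        exact triple_of_pair (hps _ _ _ _ (by linarith) (by omega))
      · rw [rot (a^u) (a^v) 1, rot (a^v) 1 (a^u), rot (a^i) (a^j) 1, rot (a^j) 1 (a^i)]
        exact triple_of_pair (hps _ _ _ _ (by linarith) (by omega))
    · -- all exponents positive: divide everything by a
      push_neg at hz
      obtain ⟨hu, hv, hw, hi, hj, hl⟩ := hz
      obtain ⟨u₁, rfl⟩ : ∃ t, u = t + 1 := ⟨u - 1, by omega⟩
      obtain ⟨v₁, rfl⟩ : ∃ t, v = t + 1 := ⟨v - 1, by omega⟩
      obtain ⟨w₁, rfl⟩ : ∃ t, w = t + 1 := ⟨w - 1, by omega⟩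
      obtain ⟨i₁, rfl⟩ : ∃ t, i = t + 1 := ⟨i - 1, by omega⟩
      obtain ⟨j₁, rfl⟩ : ∃ t, j = t + 1 := ⟨j - 1, by omega⟩
      obtain ⟨l₁, rfl⟩ : ∃ t, l = t + 1 := ⟨l - 1, by omega⟩
      have h1' : a * (a^u₁ + a^v₁ + a^w₁) = S := by rw [← h1]; ring
      have h2' : a * (a^i₁ + a^j₁ + a^l₁) = S := by rw [← h2]; ring
      have hlt : a^u₁ + a^v₁ + a^w₁ < S := by
        have hpos : 0 < a^u₁ + a^v₁ + a^w₁ := by positivity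
        have h3 : 2 * (a^u₁ + a^v₁ + a^w₁) ≤ a * (a^u₁ + a^v₁ + a^w₁) :=
          Nat.mul_le_mul_right _ ha2
        omega
      have h2'' : a^i₁ + a^j₁ + a^l₁ = a^u₁ + a^v₁ + a^w₁ :=
        Nat.eq_of_mul_eq_mul_left (by omega) (h2'.trans h1'.symm)
      have hms := IH (a^u₁ + a^v₁ + a^w₁) hlt u₁ v₁ w₁ i₁ j₁ l₁ rfl h2'' (by omega)
      have hmap := congrArg (Multiset.map (a * ·)) hms
      simpa [Multiset.insert_eq_cons, Multiset.map_cons, Multiset.map_singleton,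
        pow_succ, mul_comm] using hmap

/-- If `p, q, r` are all powers of the same prime `a`, and `x, y, z` are positive
integers with `x + y + z = p + q + r` and `xyz = pqr`, then the multiset `{x, y, z}`
equals `{p, q, r}`. -/
theorem tripartite_prime_powers_determined (a p q r x y z : ℕ)
    (ha : a.Prime)
    (hp : ∃ i : ℕ, p = a ^ i) (hq : ∃ j : ℕ, q = a ^ j) (hr : ∃ l : ℕ, r = a ^ l)
    (hx : 1 ≤ x) (hy : 1 ≤ y) (hz : 1 ≤ z)
    (hsum : x + y + z = p + q + r) (hprod : x * y * z = p * q * r) :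
    ({x, y, z} : Multiset ℕ) = {p, q, r} := by
  obtain ⟨i, rfl⟩ := hp
  obtain ⟨j, rfl⟩ := hq
  obtain ⟨l, rfl⟩ := hr
  have hpow : a ^ i * a ^ j * a ^ l = a ^ (i + j + l) := by
    rw [pow_add, pow_add]
  have hxd : x ∣ a ^ (i + j + l) := ⟨y * z, by rw [← hpow, ← hprod]; ring⟩
  have hyd : y ∣ a ^ (i + j + l) := ⟨x * z, by rw [← hpow, ← hprod]; ring⟩
  have hzd : z ∣ a ^ (i + j + l) := ⟨x * y, by rw [← hpow, ← hprod]; ring⟩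
  obtain ⟨u, -, rfl⟩ := (Nat.dvd_prime_pow ha).mp hxd
  obtain ⟨v, -, rfl⟩ := (Nat.dvd_prime_pow ha).mp hyd
  obtain ⟨w, -, rfl⟩ := (Nat.dvd_prime_pow ha).mp hzd
  have hexp : u + v + w = i + j + l := by
    have h : a ^ (u + v + w) = a ^ (i + j + l) := by
      rw [pow_add, pow_add, pow_add, pow_add]
      exact hprod
    exact Nat.pow_right_injective ha.two_le h
  exact key ha (a^u + a^v + a^w) u v w i j l rfl hsum.symm hexp
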